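/- For any integer n ≥ 1 and any real numbers x₁ < x₂ < ⋯ < x_n and t₁ < t₂ < ⋯ < t_n, the n×n matrix with (i,j) entry e^{x_i·t_j} has strictly positive determinant. -/

import Mathlib

open Real Finset

/-- A nonzero exponential sum with strictly increasing exponents cannot vanish
at `n` strictly increasing points. -/
lemma exp_sum_coeffs_zero : ∀ (n : ℕ) (x c t : Fin n → ℝ), StrictMono x → StrictMono t →
    (∀ j, ∑ i, c i * Real.exp (x i * t j) = 0) → ∀ i, c i = 0 := by
  intro n
  induction n with
  | zero => intro x c t _ _ _ i; exact i.elim0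
  | succ n ih =>
    intro x c t hx ht hsum
    set h : ℝ → ℝ := fun s => ∑ i, c i * Real.exp ((x i - x 0) * s) with hh
    set h' : ℝ → ℝ := fun s => ∑ i, c i * ((x i - x 0) * Real.exp ((x i - x 0) * s)) with hh'
    have hderiv : ∀ s : ℝ, HasDerivAt h (h' s) s := by
      intro s
      apply HasDerivAt.fun_sum
      intro i _
      have := (((hasDerivAt_id s).const_mul (x i - x 0)).exp).const_mul (c i)
      convert this using 1
      · rfl
      · rfl
      · simp only [id_eq]
        ring
    have hzero : ∀ j, h (t j) = 0 := by
      intro j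
      have : h (t j) = (∑ i, c i * Real.exp (x i * t j)) * Real.exp (-(x 0 * t j)) := by
        rw [Finset.sum_mul]
        apply Finset.sum_congr rfl
        intro i _
        have harg : (x i - x 0) * t j = x i * t j + -(x 0 * t j) := by ring
        rw [harg, Real.exp_add]
        ring
      rw [this, hsum j, zero_mul]
    -- Rolle: pick zeros of h' between consecutive zeros of h
    have hrolle : ∀ j : Fin n, ∃ s ∈ Set.Ioo (t j.castSucc) (t j.succ), h' s = 0 := by
      intro j
      apply exists_hasDerivAt_eq_zero (ht (Fin.castSucc_lt_succ (i := j)))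
      · exact fun s _ => (hderiv s).continuousAt.continuousWithinAt
      · rw [hzero, hzero]
      · exact fun s _ => hderiv s
    choose s hs hs0 using hrolle
    have hsmono : StrictMono s := by
      intro j k hjk
      have h1 : s j < t j.succ := (hs j).2
      have h2 : t k.castSucc < s k := (hs k).1
      have h3 : t j.succ ≤ t k.castSucc := by
        apply ht.monotone
        rw [Fin.le_def, Fin.val_succ, Fin.coe_castSucc]
        exact hjk
      linarith
    have hsucc : ∀ i : Fin n, c i.succ = 0 := by
      have := ih (fun i => x i.succ - x 0) (fun i => c i.succ * (x i.succ - x 0)) s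
        (fun i j hij => by
          have h := hx (Fin.succ_lt_succ_iff.mpr hij)
          show x i.succ - x 0 < x j.succ - x 0
          linarith)
        hsmono
        (by
          intro j
          have this2 : ∑ i : Fin (n + 1), c i * ((x i - x 0) * Real.exp ((x i - x 0) * s j)) = 0 :=
            hs0 j
          rw [Fin.sum_univ_succ] at this2
          simp only [sub_self, zero_mul, mul_zero, zero_add] at this2
          show ∑ i : Fin n, c i.succ * (x i.succ - x 0) * Real.exp ((x i.succ - x 0) * s j) = 0
          rw [← this2]
          apply Finset.sum_congr rfl
          intro i _
          ring)
      intro i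
      have hpos : 0 < x i.succ - x 0 := by
        have := hx (Fin.succ_pos i)
        linarith
      have := this i
      rcases mul_eq_zero.mp this with h | h
      · exact h
      · exact absurd h (ne_of_gt hpos)
    have hc0 : c 0 = 0 := by
      have := hsum 0
      rw [Fin.sum_univ_succ] at this
      simp only [hsucc, zero_mul, Finset.sum_const_zero, add_zero] at this
      rcases mul_eq_zero.mp this with h | h
      · exact h
      · exact absurd h (Real.exp_ne_zero _)
    intro i
    refine Fin.cases hc0 hsucc i

lemma exp_det_ne_zero (n : ℕ) (x t : Fin n → ℝ) (hx : StrictMono x) (ht : StrictMono t) :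
    Matrix.det (Matrix.of fun i j => Real.exp (x i * t j)) ≠ 0 := by
  intro hdet
  obtain ⟨v, hv, hv0⟩ := (Matrix.exists_vecMul_eq_zero_iff).mpr hdet
  apply hv
  funext i
  refine exp_sum_coeffs_zero n x v t hx ht ?_ i
  intro j
  have := congrFun hv0 j
  simpa [Matrix.vecMul, dotProduct] using this

theorem stmt_16 (n : ℕ) (hn : 1 ≤ n) (x t : Fin n → ℝ)
    (hx : StrictMono x) (ht : StrictMono t) :
    0 < Matrix.det (Matrix.of fun i j => Real.exp (x i * t j)) := by
  -- reference point: x0 i = i gives a (transposed) Vandermonde matrix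
  set x0 : Fin n → ℝ := fun i => (i : ℕ) with hx0def
  have hx0 : StrictMono x0 := by
    intro i j hij
    show ((i : ℕ) : ℝ) < ((j : ℕ) : ℝ)
    exact_mod_cast hij
  have hvdm : 0 < Matrix.det (Matrix.of fun i j => Real.exp (x0 i * t j)) := by
    have : (Matrix.of fun i j => Real.exp (x0 i * t j)) =
        Matrix.transpose (Matrix.vandermonde (fun j => Real.exp (t j))) := by
      ext i j
      simp only [Matrix.of_apply, Matrix.transpose_apply, Matrix.vandermonde_apply, hx0def]
      rw [Real.exp_nat_mul]
    rw [this, Matrix.det_transpose, Matrix.det_vandermonde]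
    apply Finset.prod_pos
    intro i _
    apply Finset.prod_pos
    intro j hj
    rw [Finset.mem_Ioi] at hj
    have := Real.exp_lt_exp.mpr (ht hj)
    linarith
  -- path from x0 to x inside strictly monotone vectors
  set φ : ℝ → ℝ := fun u =>
    Matrix.det (Matrix.of fun i j => Real.exp (((1 - u) * x0 i + u * x i) * t j)) with hφ
  have hmono : ∀ u ∈ Set.Icc (0 : ℝ) 1, StrictMono fun i => (1 - u) * x0 i + u * x i := by
    rintro u ⟨h0, h1⟩ i j hij
    rcases eq_or_lt_of_le h0 with rfl | hu
    · simpa using hx0 hij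
    · have h2 := hx0 hij
      have h3 := hx hij
      show (1 - u) * x0 i + u * x i < (1 - u) * x0 j + u * x j
      nlinarith
  have hne : ∀ u ∈ Set.Icc (0 : ℝ) 1, φ u ≠ 0 := fun u hu =>
    exp_det_ne_zero n _ t (hmono u hu) ht
  have hcont : ContinuousOn φ (Set.Icc 0 1) := by
    apply Continuous.continuousOn
    rw [hφ]
    apply Continuous.matrix_det
    apply continuous_matrix
    intro i j
    apply Real.continuous_exp.comp
    fun_prop
  have hφ0 : φ 0 = Matrix.det (Matrix.of fun i j => Real.exp (x0 i * t j)) := by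
    simp [hφ]
  have hφ1 : φ 1 = Matrix.det (Matrix.of fun i j => Real.exp (x i * t j)) := by
    simp [hφ]
  by_contra hle
  push_neg at hle
  have h1lt : φ 1 < 0 := lt_of_le_of_ne (hφ1 ▸ hle)
    (hφ1 ▸ exp_det_ne_zero n x t hx ht)
  have h0gt : 0 < φ 0 := hφ0 ▸ hvdm
  have : (0 : ℝ) ∈ Set.Icc (φ 1) (φ 0) := ⟨le_of_lt h1lt, le_of_lt h0gt⟩
  have := intermediate_value_Icc' (by norm_num : (0:ℝ) ≤ 1) hcont this
  obtain ⟨u, hu, hu0⟩ := this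
  exact hne u hu hu0
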